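/- arXiv:2603.12414 — 2 statements merged into one kernel-verified Lean document; each statement's English description precedes it below -/
import Mathlib

section
/- Let Ā be a d×d complex matrix that is diagonalizable, Ā = V D V⁻¹ with V invertible and D diagonal, with spectral radius ρ = ρ(Ā) satisfying 0 < ρ < 1, and set κ = ‖V‖₂ ‖V⁻¹‖₂. Let B be a d×m complex matrix such that the Controllability Gramian W_c = Σ_{k=0}^{∞} Āᵏ B Bᴴ (Āᴴ)ᵏ exists (the series is summable), and suppose its largest eigenvalue λ_max(W_c) is strictly positive. Let h₀ ∈ ℂᵈ be nonzero and let ε > 0. Then for every natural number t such that ‖Āᵗ h₀‖₂² / λ_max(W_c) ≥ ε², one has t ≤ log( κ · √( ‖h₀‖₂² / (ε² · λ_max(W_c)) ) ) / log(1/ρ). -/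
open Matrix

/-- Spectral radius of a complex square matrix: max of |λ| over eigenvalues. -/
noncomputable def specRad {d : ℕ} (M : Matrix (Fin d) (Fin d) ℂ) : ℝ :=
  sSup ((fun z : ℂ => ‖z‖) '' spectrum ℂ M)

/-- Euclidean (ℓ²) norm of a complex vector. -/
noncomputable def eNorm {d : ℕ} (v : Fin d → ℂ) : ℝ :=
  ‖(WithLp.equiv 2 (Fin d → ℂ)).symm v‖

/-- The ℓ²→ℓ² operator norm of a complex matrix. -/
noncomputable def opNorm {d m : ℕ} (M : Matrix (Fin d) (Fin m) ℂ) : ℝ :=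
  ‖LinearMap.toContinuousLinearMap (Matrix.toEuclideanLin M)‖

section Aux
open scoped Matrix.Norms.L2Operator

lemma opNorm_eq_l2 {d m : ℕ} (M : Matrix (Fin d) (Fin m) ℂ) : opNorm M = ‖M‖ := rfl

lemma eNorm_mulVec_le {d m : ℕ} (M : Matrix (Fin d) (Fin m) ℂ) (x : Fin m → ℂ) :
    eNorm (M *ᵥ x) ≤ ‖M‖ * eNorm x :=
  M.l2_opNorm_mulVec ((WithLp.equiv 2 (Fin m → ℂ)).symm x)

lemma diag_opNorm_le {d : ℕ} (w : Fin d → ℂ) {r : ℝ} (hr : 0 ≤ r)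
    (hw : ∀ i, ‖w i‖ ≤ r) : ‖(Matrix.diagonal w : Matrix (Fin d) (Fin d) ℂ)‖ ≤ r := by
  rw [Matrix.l2_opNorm_def]
  refine ContinuousLinearMap.opNorm_le_bound _ hr fun x => ?_
  simp only [LinearEquiv.trans_apply, LinearMap.coe_toContinuousLinearMap',
    Matrix.toEuclideanLin_apply]
  rw [EuclideanSpace.norm_eq, EuclideanSpace.norm_eq, ← Real.sqrt_sq hr,
    ← Real.sqrt_mul (sq_nonneg r)]
  apply Real.sqrt_le_sqrt
  rw [Finset.mul_sum]
  refine Finset.sum_le_sum fun i _ => ?_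
  have : ((WithLp.equiv 2 (Fin d → ℂ)).symm
      (Matrix.diagonal w *ᵥ (WithLp.equiv 2 (Fin d → ℂ)) x)) i = w i * x i := by
    simp [Matrix.mulVec_diagonal]
  rw [show (WithLp.toLp 2 (Matrix.diagonal w *ᵥ x.ofLp)).ofLp i = w i * x i from this]
  calc ‖w i * x i‖ ^ 2 = ‖w i‖ ^ 2 * ‖x i‖ ^ 2 := by rw [norm_mul]; ring
    _ ≤ r ^ 2 * ‖x i‖ ^ 2 := by gcongr; exact hw i

/-- **Spectral Horizon Bound.** For a diagonalizable `Ā = V D V⁻¹` with spectral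
radius `0 < ρ < 1`, condition number `κ = ‖V‖₂‖V⁻¹‖₂`, and Controllability
Gramian `W_c = Σ_{k=0}^∞ Āᵏ B Bᴴ (Āᴴ)ᵏ` with `λ_max(W_c) > 0`, any time `t` at
which the signal-to-noise ratio `‖Āᵗ h₀‖₂² / λ_max(W_c)` still exceeds `ε²`
satisfies `t ≤ log(κ √(‖h₀‖₂² / (ε² λ_max(W_c)))) / log(1/ρ)`. -/
theorem spectral_horizon_bound
    {d m : ℕ} (Abar V D : Matrix (Fin d) (Fin d) ℂ)
    (hV : IsUnit V) (hD : D.IsDiag) (hA : Abar = V * D * V⁻¹)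
    (hrho0 : 0 < specRad Abar) (hrho1 : specRad Abar < 1)
    (B : Matrix (Fin d) (Fin m) ℂ)
    (hsum : Summable (fun k : ℕ => Abar ^ k * B * Bᴴ * (Abarᴴ) ^ k))
    (W : Matrix (Fin d) (Fin d) ℂ)
    (hWdef : W = ∑' k : ℕ, Abar ^ k * B * Bᴴ * (Abarᴴ) ^ k)
    (hW : W.IsHermitian)
    (hlam : 0 < ⨆ i, hW.eigenvalues i)
    (h0 : Fin d → ℂ) (hh0 : h0 ≠ 0) (ε : ℝ) (hε : 0 < ε)
    (t : ℕ)
    (ht : ε ^ 2 ≤ eNorm ((Abar ^ t) *ᵥ h0) ^ 2 / (⨆ i, hW.eigenvalues i)) :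
    (t : ℝ) ≤
      Real.log ((opNorm V * opNorm V⁻¹) *
          Real.sqrt (eNorm h0 ^ 2 / (ε ^ 2 * ⨆ i, hW.eigenvalues i))) /
        Real.log (1 / specRad Abar) := by
  classical
  set ρ := specRad Abar with hρdef
  set lam := (⨆ i, hW.eigenvalues i) with hlamdef
  obtain ⟨i0, hi0⟩ := Function.ne_iff.mp hh0
  haveI : Nonempty (Fin d) := ⟨i0⟩
  obtain ⟨u, rfl⟩ := hV
  -- spectrum of Abar is the range of the diagonal of D
  have hspec : spectrum ℂ Abar = Set.range D.diag := by
    rw [hA, ← Matrix.coe_units_inv, spectrum.units_conjugate]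
    conv_lhs => rw [← hD.diagonal_diag]
    exact spectrum_diagonal _
  have hDle : ∀ i, ‖D i i‖ ≤ ρ := by
    intro i
    have hmem : ‖D i i‖ ∈ (fun z : ℂ => ‖z‖) '' spectrum ℂ Abar :=
      ⟨D i i, by rw [hspec]; exact ⟨i, rfl⟩, rfl⟩
    exact le_csSup ((Abar.finite_spectrum.image _).bddAbove) hmem
  have hDt : ‖D ^ t‖ ≤ ρ ^ t := by
    have hDpow : D ^ t = Matrix.diagonal (fun i => D i i ^ t) := by
      conv_lhs => rw [← hD.diagonal_diag]
      rw [Matrix.diagonal_pow]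
      rfl
    rw [hDpow]
    refine diag_opNorm_le _ (pow_nonneg hrho0.le t) fun i => ?_
    rw [norm_pow]
    exact pow_le_pow_left₀ (norm_nonneg _) (hDle i) t
  set κ := ‖(↑u : Matrix (Fin d) (Fin d) ℂ)‖ * ‖((↑u : Matrix (Fin d) (Fin d) ℂ))⁻¹‖ with hκdef
  have hop : opNorm (↑u : Matrix (Fin d) (Fin d) ℂ) *
      opNorm ((↑u : Matrix (Fin d) (Fin d) ℂ))⁻¹ = κ := rfl
  have huinv : ((↑u : Matrix (Fin d) (Fin d) ℂ))⁻¹ = ↑u⁻¹ := (Matrix.coe_units_inv u).symm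
  have hκpos : 0 < κ := by
    apply mul_pos <;> rw [norm_pos_iff]
    · exact u.isUnit.ne_zero
    · rw [huinv]; exact u⁻¹.isUnit.ne_zero
  have hhpos : 0 < eNorm h0 := by
    have hne : (WithLp.equiv 2 (Fin d → ℂ)).symm h0 ≠ 0 := by
      intro h
      exact hh0 (by simpa using congrArg (WithLp.equiv 2 (Fin d → ℂ)) h)
    simpa [eNorm] using norm_pos_iff.mpr hne
  -- bound on the matrix power
  have hAt : ‖Abar ^ t‖ ≤ κ * ρ ^ t := by
    have : Abar ^ t = (↑u : Matrix (Fin d) (Fin d) ℂ) * D ^ t * ((↑u : Matrix (Fin d) (Fin d) ℂ))⁻¹ := by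
      rw [hA, huinv, Units.conj_pow, ← huinv]
    rw [this]
    calc ‖(↑u : Matrix (Fin d) (Fin d) ℂ) * D ^ t * ((↑u : Matrix (Fin d) (Fin d) ℂ))⁻¹‖
        ≤ ‖(↑u : Matrix (Fin d) (Fin d) ℂ) * D ^ t‖ * ‖((↑u : Matrix (Fin d) (Fin d) ℂ))⁻¹‖ :=
          Matrix.l2_opNorm_mul _ _
      _ ≤ (‖(↑u : Matrix (Fin d) (Fin d) ℂ)‖ * ‖D ^ t‖) * ‖((↑u : Matrix (Fin d) (Fin d) ℂ))⁻¹‖ := by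
          gcongr; exact Matrix.l2_opNorm_mul _ _
      _ ≤ (‖(↑u : Matrix (Fin d) (Fin d) ℂ)‖ * ρ ^ t) * ‖((↑u : Matrix (Fin d) (Fin d) ℂ))⁻¹‖ := by
          gcongr
      _ = κ * ρ ^ t := by rw [hκdef]; ring
  have hN : eNorm ((Abar ^ t) *ᵥ h0) ≤ κ * ρ ^ t * eNorm h0 := by
    calc eNorm ((Abar ^ t) *ᵥ h0) ≤ ‖Abar ^ t‖ * eNorm h0 := eNorm_mulVec_le _ _
      _ ≤ κ * ρ ^ t * eNorm h0 := by gcongr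
  have hRpos : 0 ≤ κ * ρ ^ t * eNorm h0 :=
    mul_nonneg (mul_nonneg hκpos.le (pow_nonneg hrho0.le t)) hhpos.le
  have hsq : ε ^ 2 * lam ≤ (κ * ρ ^ t * eNorm h0) ^ 2 := by
    refine ((le_div_iff₀ hlam).mp ht).trans ?_
    have h0n : (0:ℝ) ≤ eNorm ((Abar ^ t) *ᵥ h0) := norm_nonneg _
    exact pow_le_pow_left₀ h0n hN 2
  have hsqrt : ε * Real.sqrt lam ≤ κ * ρ ^ t * eNorm h0 := by
    have h1 := Real.sqrt_le_sqrt hsq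
    rwa [Real.sqrt_mul (sq_nonneg ε), Real.sqrt_sq hε.le, Real.sqrt_sq hRpos] at h1
  have hden : 0 < ε * Real.sqrt lam := mul_pos hε (Real.sqrt_pos.mpr hlam)
  have hinv : (1 / ρ) ^ t ≤ κ * eNorm h0 / (ε * Real.sqrt lam) := by
    rw [div_pow, one_pow, div_le_div_iff₀ (pow_pos hrho0 t) hden, one_mul]
    calc ε * Real.sqrt lam ≤ κ * ρ ^ t * eNorm h0 := hsqrt
      _ = κ * eNorm h0 * ρ ^ t := by ring
  have hXeq : κ * eNorm h0 / (ε * Real.sqrt lam)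
      = κ * Real.sqrt (eNorm h0 ^ 2 / (ε ^ 2 * lam)) := by
    rw [Real.sqrt_div (sq_nonneg _), Real.sqrt_sq hhpos.le, Real.sqrt_mul (sq_nonneg ε),
      Real.sqrt_sq hε.le, mul_div_assoc]
  have hlog1 : 0 < Real.log (1 / ρ) :=
    Real.log_pos (by rw [lt_div_iff₀ hrho0, one_mul]; exact hrho1)
  rw [hop, le_div_iff₀ hlog1, ← Real.log_pow]
  exact Real.log_le_log (pow_pos (one_div_pos.mpr hrho0) t) (hinv.trans_eq hXeq)

end Aux
end

section
/- Let A be a d×d complex matrix with d ≥ 1, let Δ_max > 0, and define Φ(Δ) = exp(Δ·A). Then for all Δ₁, Δ₂ ∈ [0, Δ_max], | ρ(Φ(Δ₁)) − ρ(Φ(Δ₂)) | ≤ L_A · |Δ₁ − Δ₂|, where L_A = ‖A‖₂ · exp(Δ_max · ‖A‖₂). That is, the map Δ ↦ ρ(exp(Δ·A)) is Lipschitz on [0, Δ_max] with Lipschitz constant ‖A‖₂ · exp(Δ_max ‖A‖₂). -/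
open Matrix

open NormedSpace Pointwise

section CLM

variable {H : Type*} [NormedAddCommGroup H] [NormedSpace ℂ H] [CompleteSpace H]

lemma pow_apply_eigen (a : H →L[ℂ] H) {μ : ℂ} {v : H} (hv : a v = μ • v) (n : ℕ) :
    (a ^ n) v = μ ^ n • v := by
  induction n with
  | zero => simp
  | succ n ih =>
      rw [pow_succ, ContinuousLinearMap.mul_apply, hv, _root_.map_smul, ih, smul_smul, pow_succ]
      ring_nf

lemma exp_apply_eigen (a : H →L[ℂ] H) {μ : ℂ} {v : H} (hv : a v = μ • v) :
    exp a v = Complex.exp μ • v := by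
  have hs : Summable fun n : ℕ => ((Nat.factorial n : ℂ)⁻¹) • a ^ n := expSeries_summable' a
  have h1 : exp a v = ∑' n : ℕ, (((Nat.factorial n : ℂ)⁻¹) • a ^ n) v := by
    rw [exp_eq_tsum ℂ]
    exact ((ContinuousLinearMap.apply ℂ H v).map_tsum hs)
  have h2 : ∀ n : ℕ, (((Nat.factorial n : ℂ)⁻¹) • a ^ n) v = (((Nat.factorial n : ℂ)⁻¹) * μ ^ n) • v := by
    intro n
    rw [ContinuousLinearMap.smul_apply, pow_apply_eigen a hv, smul_smul]
  have hs2 : Summable fun n : ℕ => ((Nat.factorial n : ℂ)⁻¹) * μ ^ n := by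
    simpa [smul_eq_mul] using expSeries_summable' (𝕂 := ℂ) μ
  rw [h1]
  simp_rw [h2]
  rw [hs2.tsum_smul_const]
  congr 1
  rw [Complex.exp_eq_exp_ℂ, exp_eq_tsum ℂ]
  simp [smul_eq_mul]

end CLM

section CLM2

variable {H : Type*} [NormedAddCommGroup H] [NormedSpace ℂ H] [CompleteSpace H]
  [FiniteDimensional ℂ H]

noncomputable def clmAlgEquiv : (H →L[ℂ] H) ≃ₐ[ℂ] (H →ₗ[ℂ] H) where
  toFun f := (f : H →ₗ[ℂ] H)
  invFun f := LinearMap.toContinuousLinearMap f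
  left_inv f := by ext x; simp
  right_inv f := by ext x; simp
  map_mul' f g := rfl
  map_add' f g := rfl
  commutes' c := rfl

lemma mem_spectrum_clm_iff (a : H →L[ℂ] H) (μ : ℂ) :
    μ ∈ spectrum ℂ a ↔ Module.End.HasEigenvalue (a : H →ₗ[ℂ] H) μ := by
  rw [← AlgEquiv.spectrum_eq (clmAlgEquiv (H := H)) a,
    Module.End.hasEigenvalue_iff_mem_spectrum]
  rfl

theorem spectrum_clm_exp (a : H →L[ℂ] H) [Nontrivial H] :
    spectrum ℂ (exp a) = Complex.exp '' spectrum ℂ a := by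
  ext μ
  constructor
  · intro hμ
    have h : Module.End.HasEigenvalue ((exp a : H →L[ℂ] H) : H →ₗ[ℂ] H) μ :=
      (mem_spectrum_clm_iff _ _).mp hμ
    set p := Module.End.eigenspace ((exp a : H →L[ℂ] H) : H →ₗ[ℂ] H) μ with hp_def
    haveI : Nontrivial p := Submodule.nontrivial_iff_ne_bot.mpr h
    have hcomm : a * exp a = exp a * a := ((Commute.refl a).exp_right).eq
    have hinv : ∀ v ∈ p, ((a : H →ₗ[ℂ] H)) v ∈ p := by
      intro v hv
      have hv' : exp a v = μ • v := Module.End.mem_eigenspace_iff.mp hv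
      rw [hp_def, Module.End.mem_eigenspace_iff]
      show exp a (a v) = μ • a v
      calc exp a (a v) = (exp a * a) v := rfl
        _ = (a * exp a) v := by rw [hcomm]
        _ = a (exp a v) := rfl
        _ = μ • a v := by rw [hv', _root_.map_smul]
    set g := LinearMap.restrict (a : H →ₗ[ℂ] H) hinv with hg
    obtain ⟨lam, hlam⟩ := Module.End.exists_eigenvalue g
    obtain ⟨w, hw⟩ := hlam.exists_hasEigenvector
    have hw0 : (w : H) ≠ 0 := fun hcoe => hw.2 (Submodule.coe_eq_zero.mp hcoe)
    have haw : a (w : H) = lam • (w : H) := by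
      have h1 : g w = lam • w := hw.apply_eq_smul
      have h2 : ((g w : p) : H) = (a : H →ₗ[ℂ] H) (w : H) :=
        LinearMap.restrict_coe_apply _ _ _
      rw [h1] at h2
      simpa using h2.symm
    have hμw : exp a (w : H) = μ • (w : H) := Module.End.mem_eigenspace_iff.mp w.2
    have hkey : Complex.exp lam • (w : H) = μ • (w : H) := by
      rw [← exp_apply_eigen a haw, hμw]
    have hμeq : Complex.exp lam = μ := smul_left_injective ℂ hw0 hkey
    refine ⟨lam, ?_, hμeq⟩
    exact (mem_spectrum_clm_iff _ _).mpr
      (Module.End.hasEigenvalue_of_hasEigenvector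
        ⟨Module.End.mem_eigenspace_iff.mpr haw, hw0⟩)
  · rintro ⟨lam, hlam, rfl⟩
    obtain ⟨v, hv⟩ := ((mem_spectrum_clm_iff a lam).mp hlam).exists_hasEigenvector
    have hav : a v = lam • v := hv.apply_eq_smul
    have : exp a v = Complex.exp lam • v := exp_apply_eigen a hav
    exact (mem_spectrum_clm_iff _ _).mpr
      (Module.End.hasEigenvalue_of_hasEigenvector
        ⟨Module.End.mem_eigenspace_iff.mpr this, hv.2⟩)

end CLM2

section MatrixPart

variable {d : ℕ}

lemma toEuclideanCLM_exp (hd : 1 ≤ d) (M : Matrix (Fin d) (Fin d) ℂ) :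
    Matrix.toEuclideanCLM (𝕜 := ℂ) (exp M) = exp (Matrix.toEuclideanCLM (𝕜 := ℂ) M) := by
  letI : SeminormedRing (Matrix (Fin d) (Fin d) ℂ) := Matrix.linftyOpSemiNormedRing
  letI : NormedRing (Matrix (Fin d) (Fin d) ℂ) := Matrix.linftyOpNormedRing
  letI : NormedAlgebra ℂ (Matrix (Fin d) (Fin d) ℂ) := Matrix.linftyOpNormedAlgebra
  have cont : Continuous (Matrix.toEuclideanCLM (n := Fin d) (𝕜 := ℂ)) := by
    have : (⇑(Matrix.toEuclideanCLM (n := Fin d) (𝕜 := ℂ))) =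
        ⇑((Matrix.toEuclideanLin.trans LinearMap.toContinuousLinearMap :
          Matrix (Fin d) (Fin d) ℂ ≃ₗ[ℂ]
            (EuclideanSpace ℂ (Fin d) →L[ℂ] EuclideanSpace ℂ (Fin d)))) := by
      funext M
      exact ContinuousLinearMap.coe_injective
        ((Matrix.coe_toEuclideanCLM_eq_toEuclideanLin M).trans
          (LinearMap.coe_toContinuousLinearMap _).symm)
    rw [this]
    exact LinearMap.continuous_of_finiteDimensional _
  exact map_exp_of_mem_ball (𝕂 := ℂ) (Matrix.toEuclideanCLM (n := Fin d) (𝕜 := ℂ)) cont M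
    ((expSeries_radius_eq_top ℂ (Matrix (Fin d) (Fin d) ℂ)).symm ▸ edist_lt_top _ _)

lemma matrix_spectrum_exp (hd : 1 ≤ d) (M : Matrix (Fin d) (Fin d) ℂ) :
    spectrum ℂ (exp M) = Complex.exp '' spectrum ℂ M := by
  haveI : Nonempty (Fin d) := ⟨⟨0, hd⟩⟩
  haveI : Nontrivial (EuclideanSpace ℂ (Fin d)) :=
    (WithLp.equiv 2 (Fin d → ℂ)).nontrivial
  calc spectrum ℂ (exp M)
      = spectrum ℂ (Matrix.toEuclideanCLM (𝕜 := ℂ) (exp M)) :=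
        (AlgEquiv.spectrum_eq (Matrix.toEuclideanCLM (n := Fin d) (𝕜 := ℂ)) _).symm
    _ = spectrum ℂ (exp (Matrix.toEuclideanCLM (𝕜 := ℂ) M)) := by
        rw [toEuclideanCLM_exp hd]
    _ = Complex.exp '' spectrum ℂ (Matrix.toEuclideanCLM (𝕜 := ℂ) M) :=
        spectrum_clm_exp _
    _ = Complex.exp '' spectrum ℂ M := by
        rw [AlgEquiv.spectrum_eq (Matrix.toEuclideanCLM (n := Fin d) (𝕜 := ℂ))]

end MatrixPart

section Main

variable {d : ℕ}

lemma spectrum_nonempty_matrix (hd : 1 ≤ d) (A : Matrix (Fin d) (Fin d) ℂ) :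
    (spectrum ℂ A).Nonempty := by
  haveI : Nonempty (Fin d) := ⟨⟨0, hd⟩⟩
  haveI : Nontrivial (EuclideanSpace ℂ (Fin d)) :=
    (WithLp.equiv 2 (Fin d → ℂ)).nontrivial
  obtain ⟨lam, hlam⟩ := Module.End.exists_eigenvalue
    ((Matrix.toEuclideanCLM (𝕜 := ℂ) A : EuclideanSpace ℂ (Fin d) →L[ℂ] EuclideanSpace ℂ (Fin d)) :
      EuclideanSpace ℂ (Fin d) →ₗ[ℂ] EuclideanSpace ℂ (Fin d))
  refine ⟨lam, ?_⟩
  rw [← AlgEquiv.spectrum_eq (Matrix.toEuclideanCLM (n := Fin d) (𝕜 := ℂ))]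
  exact (mem_spectrum_clm_iff _ _).mpr hlam

lemma spectrum_compact_matrix (A : Matrix (Fin d) (Fin d) ℂ) :
    IsCompact (spectrum ℂ A) := by
  rw [← AlgEquiv.spectrum_eq (Matrix.toEuclideanCLM (n := Fin d) (𝕜 := ℂ))]
  exact spectrum.isCompact _

lemma norm_le_opNorm_of_mem_spectrum (hd : 1 ≤ d) {A : Matrix (Fin d) (Fin d) ℂ} {μ : ℂ}
    (hμ : μ ∈ spectrum ℂ A) : ‖μ‖ ≤ opNorm A := by
  haveI : Nonempty (Fin d) := ⟨⟨0, hd⟩⟩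
  haveI : Nontrivial (EuclideanSpace ℂ (Fin d)) :=
    (WithLp.equiv 2 (Fin d → ℂ)).nontrivial
  rw [← AlgEquiv.spectrum_eq (Matrix.toEuclideanCLM (n := Fin d) (𝕜 := ℂ))] at hμ
  have h := spectrum.norm_le_norm_of_mem hμ
  have he : LinearMap.toContinuousLinearMap (Matrix.toEuclideanLin A) =
      Matrix.toEuclideanCLM (𝕜 := ℂ) A :=
    ContinuousLinearMap.coe_injective
      ((LinearMap.coe_toContinuousLinearMap _).trans
        (Matrix.coe_toEuclideanCLM_eq_toEuclideanLin A).symm)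
  rw [opNorm, he]
  exact h

lemma specRad_exp_eq (hd : 1 ≤ d) (A : Matrix (Fin d) (Fin d) ℂ) (Δ : ℝ) :
    specRad (exp (Δ • A)) =
      sSup ((fun z : ℂ => Real.exp (Δ * z.re)) '' spectrum ℂ A) := by
  haveI : Nonempty (Fin d) := ⟨⟨0, hd⟩⟩
  have hsm : Δ • A = ((Δ : ℂ)) • A := by
    ext i j
    simp [Matrix.smul_apply, Complex.real_smul]
  have hspec : spectrum ℂ (Δ • A) = (Δ : ℂ) • spectrum ℂ A := by
    rw [hsm]
    exact spectrum.smul_eq_smul _ _ (spectrum_nonempty_matrix hd A)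
  rw [specRad, matrix_spectrum_exp hd, hspec]
  have himg : (Δ : ℂ) • spectrum ℂ A = (fun z : ℂ => (Δ : ℂ) * z) '' spectrum ℂ A := by
    ext z; simp [Set.mem_smul_set, smul_eq_mul]
  rw [himg, Set.image_image, Set.image_image]
  have hfun : (fun x : ℂ => ‖Complex.exp ((Δ : ℂ) * x)‖) =
      fun z : ℂ => Real.exp (Δ * z.re) := by
    funext z
    rw [Complex.norm_exp]
    congr 1
    simp [Complex.mul_re]
  rw [hfun]

end Main

/-- **Lipschitz continuity of the spectral radius under discretization.**
The map `Δ ↦ ρ(exp(Δ·A))` is Lipschitz on `[0, Δ_max]` with constant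
`L_A = ‖A‖₂ · exp(Δ_max‖A‖₂)`. -/
theorem specRad_exp_smul_lipschitz
    {d : ℕ} (hd : 1 ≤ d) (A : Matrix (Fin d) (Fin d) ℂ) (Δmax : ℝ) (hΔmax : 0 < Δmax)
    (Δ₁ Δ₂ : ℝ) (h1 : Δ₁ ∈ Set.Icc 0 Δmax) (h2 : Δ₂ ∈ Set.Icc 0 Δmax) :
    |specRad (NormedSpace.exp (Δ₁ • A)) - specRad (NormedSpace.exp (Δ₂ • A))| ≤
      (opNorm A * Real.exp (Δmax * opNorm A)) * |Δ₁ - Δ₂| := by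
  set R := opNorm A with hR
  have hR0 : 0 ≤ R := norm_nonneg _
  set L := R * Real.exp (Δmax * R) with hL
  set S := spectrum ℂ A with hS_def
  have hS : S.Nonempty := spectrum_nonempty_matrix hd A
  have hSc : IsCompact S := spectrum_compact_matrix A
  have hcont : ∀ Δ : ℝ, Continuous fun z : ℂ => Real.exp (Δ * z.re) := fun Δ =>
    Real.continuous_exp.comp (continuous_const.mul Complex.continuous_re)
  -- pointwise Lipschitz estimate
  have hpt : ∀ z ∈ S, ∀ (Δ Δ' : ℝ), Δ ∈ Set.Icc 0 Δmax → Δ' ∈ Set.Icc 0 Δmax →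
      Real.exp (Δ * z.re) - Real.exp (Δ' * z.re) ≤ L * |Δ - Δ'| := by
    intro z hz Δ Δ' hΔ hΔ'
    have hzre : |z.re| ≤ R :=
      le_trans (Complex.abs_re_le_norm z) (norm_le_opNorm_of_mem_spectrum hd hz)
    have hb : ∀ t : ℝ, t ∈ Set.Icc (0:ℝ) Δmax → t * z.re ≤ Δmax * R := by
      intro t ht
      calc t * z.re ≤ t * |z.re| := by nlinarith [le_abs_self z.re, ht.1]
        _ ≤ Δmax * R := by nlinarith [abs_nonneg z.re, ht.1, ht.2]
    rcases le_total (Δ * z.re) (Δ' * z.re) with hab | hab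
    · have hexp : Real.exp (Δ * z.re) ≤ Real.exp (Δ' * z.re) := Real.exp_le_exp.mpr hab
      have : 0 ≤ L * |Δ - Δ'| := by positivity
      linarith
    · set a := Δ * z.re
      set b := Δ' * z.re
      have hmul : Real.exp a * Real.exp (b - a) = Real.exp b := by
        rw [← Real.exp_add]; ring_nf
      have h3 : Real.exp a - Real.exp b ≤ Real.exp a * (a - b) := by
        nlinarith [Real.add_one_le_exp (b - a), Real.exp_pos a, hmul]
      have h4 : Real.exp a ≤ Real.exp (Δmax * R) := Real.exp_le_exp.mpr (hb Δ hΔ)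
      have h5 : a - b ≤ R * |Δ - Δ'| := by
        calc a - b = (Δ - Δ') * z.re := by ring
          _ ≤ |(Δ - Δ') * z.re| := le_abs_self _
          _ = |Δ - Δ'| * |z.re| := abs_mul _ _
          _ ≤ |Δ - Δ'| * R := by nlinarith [abs_nonneg (Δ - Δ')]
          _ = R * |Δ - Δ'| := mul_comm _ _
      have hab' : 0 ≤ a - b := sub_nonneg.mpr hab
      calc Real.exp a - Real.exp b ≤ Real.exp a * (a - b) := h3
        _ ≤ Real.exp (Δmax * R) * (a - b) := mul_le_mul_of_nonneg_right h4 hab'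
        _ ≤ Real.exp (Δmax * R) * (R * |Δ - Δ'|) :=
            mul_le_mul_of_nonneg_left h5 (Real.exp_pos _).le
        _ = L * |Δ - Δ'| := by rw [hL]; ring
  -- rewrite the spectral radii as sups
  have hrw : ∀ Δ : ℝ, specRad (NormedSpace.exp (Δ • A)) =
      sSup ((fun z : ℂ => Real.exp (Δ * z.re)) '' S) := fun Δ => specRad_exp_eq hd A Δ
  rw [hrw Δ₁, hrw Δ₂]
  set ρ : ℝ → ℝ := fun Δ => sSup ((fun z : ℂ => Real.exp (Δ * z.re)) '' S) with hρ
  have hmem : ∀ Δ : ℝ, ρ Δ ∈ (fun z : ℂ => Real.exp (Δ * z.re)) '' S := fun Δ =>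
    ((hSc.image (hcont Δ)).sSup_mem (hS.image _))
  have hub : ∀ (Δ : ℝ) (z : ℂ), z ∈ S → Real.exp (Δ * z.re) ≤ ρ Δ := fun Δ z hz =>
    le_csSup (hSc.image (hcont Δ)).bddAbove (Set.mem_image_of_mem _ hz)
  rw [abs_sub_le_iff]
  constructor
  · obtain ⟨z₁, hz₁, hz₁eq⟩ := hmem Δ₁
    have hptt := hpt z₁ hz₁ Δ₁ Δ₂ h1 h2
    have hubb := hub Δ₂ z₁ hz₁
    have h6 : ρ Δ₁ = Real.exp (Δ₁ * z₁.re) := hz₁eq.symm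
    show ρ Δ₁ - ρ Δ₂ ≤ L * |Δ₁ - Δ₂|
    rw [h6]
    linarith
  · obtain ⟨z₂, hz₂, hz₂eq⟩ := hmem Δ₂
    have hptt := hpt z₂ hz₂ Δ₂ Δ₁ h2 h1
    have hubb := hub Δ₁ z₂ hz₂
    have h6 : ρ Δ₂ = Real.exp (Δ₂ * z₂.re) := hz₂eq.symm
    have habs : |Δ₂ - Δ₁| = |Δ₁ - Δ₂| := abs_sub_comm _ _
    rw [habs] at hptt
    show ρ Δ₂ - ρ Δ₁ ≤ L * |Δ₁ - Δ₂|
    rw [h6]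
    linarith
end
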